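/- Let H be a numerical semigroup with 1 ∉ H, R = k[H] ⊆ S = k[t], and I an ideal of R with IS = t^q(1−t)S, where 0 < q ∈ H. Write 𝔞 = t^qS ∩ R = (t^{b₁},...,t^{b_n}) minimally, let 𝔟 = (t^{b₂},...,t^{b_n}), and choose b₀ = b ∈ H with t^b ∈ 𝔟 and gcd(b₁, b) = 1. Then the integral closure of I equals the ideal (t^{b₁} − t^{b₀}, { t^{b_i} − t^{b₀ + b_i} }_{2 ≤ i ≤ n}); in particular μ_R(Ī) ≤ μ_R(𝔞). -/

import Mathlib

open Polynomial

/-- Minimal number of generators of an ideal. -/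
noncomputable def muIdeal {A : Type*} [CommRing A] (I : Ideal A) : ℕ :=
  sInf {n | ∃ s : Finset A, s.card = n ∧ Ideal.span (s : Set A) = I}

set_option maxHeartbeats 1000000 in
/-- let `H` be a numerical semigroup with `1 ∉ H`, `R = k[H]`, and `I`
an ideal of `R` with `IS = t^q(1−t)S`, `0 < q ∈ H`. Write `𝔞 = t^qS ∩ R =
(t^{b₁},…,t^{b_n})` minimally, `𝔟 = (t^{b₂},…,t^{b_n})`, and choose `b₀ ∈ H` with
`t^{b₀} ∈ 𝔟` and `gcd(b₁, b₀) = 1`. Then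
`Ī = (t^{b₁} − t^{b₀}, {t^{bᵢ} − t^{b₀+bᵢ}}_{2 ≤ i ≤ n})`; in particular
`μ_R(Ī) ≤ μ_R(𝔞) = n`. -/
theorem integral_closure_explicit_generators
    (k : Type*) [Field k] (H : AddSubmonoid ℕ) (hfin : ((H : Set ℕ)ᶜ).Finite)
    (h1 : (1 : ℕ) ∉ H)
    (R : Subalgebra k (Polynomial k))
    (hRdef : R = Algebra.adjoin k {p : Polynomial k | ∃ h ∈ H, p = (X : Polynomial k) ^ h})
    (I : Ideal R) (q : ℕ) (hqH : q ∈ H) (hq : 0 < q)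
    (hIS : I.map (algebraMap R (Polynomial k)) =
      Ideal.span {(X : Polynomial k) ^ q * (1 - X)})
    (n : ℕ) (hn : 0 < n) (b : Fin n → ℕ) (hbH : ∀ i, b i ∈ H) (hbq : ∀ i, q ≤ b i)
    (h𝔞 : (Ideal.span {(X : Polynomial k) ^ q}).comap (algebraMap R (Polynomial k)) =
      Ideal.span {x : R | ∃ i : Fin n, (x : Polynomial k) = (X : Polynomial k) ^ (b i)})
    (hmin : muIdeal ((Ideal.span {(X : Polynomial k) ^ q}).comap
      (algebraMap R (Polynomial k))) = n)
    (𝔟 : Ideal R)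
    (h𝔟 : 𝔟 = Ideal.span {x : R | ∃ i : Fin n, i ≠ (⟨0, hn⟩ : Fin n) ∧
      (x : Polynomial k) = (X : Polynomial k) ^ (b i)})
    (b₀ : ℕ) (hb₀H : b₀ ∈ H)
    (hb₀𝔟 : ∀ x : R, (x : Polynomial k) = (X : Polynomial k) ^ b₀ → x ∈ 𝔟)
    (hgcd : Nat.gcd (b ⟨0, hn⟩) b₀ = 1) :
    (I.map (algebraMap R (Polynomial k))).comap (algebraMap R (Polynomial k)) =
        Ideal.span {x : R |
          (x : Polynomial k) = (X : Polynomial k) ^ (b ⟨0, hn⟩) - X ^ b₀ ∨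
          ∃ i : Fin n, i ≠ (⟨0, hn⟩ : Fin n) ∧
            (x : Polynomial k) = (X : Polynomial k) ^ (b i) - X ^ (b₀ + b i)} ∧
      muIdeal ((I.map (algebraMap R (Polynomial k))).comap
        (algebraMap R (Polynomial k))) ≤ n := by
  classical
  have halg : ∀ x : R, algebraMap R (Polynomial k) x = (x : Polynomial k) := fun x => rfl
  have hmemR : ∀ m : ℕ, m ∈ H → (X : Polynomial k) ^ m ∈ R := by
    intro m hm
    rw [hRdef]
    exact Algebra.subset_adjoin ⟨m, hm, rfl⟩
  set τ : (m : ℕ) → m ∈ H → R := fun m hm => ⟨X ^ m, hmemR m hm⟩ with hτdef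
  have hτ : ∀ m hm, ((τ m hm : R) : Polynomial k) = X ^ m := fun _ _ => rfl
  -- supports of elements of R lie in H
  have hcoeffH : ∀ x : R, ∀ m : ℕ, (x : Polynomial k).coeff m ≠ 0 → m ∈ H := by
    intro x
    let T : Subalgebra k (Polynomial k) :=
      { carrier := {p : Polynomial k | ∀ m : ℕ, p.coeff m ≠ 0 → m ∈ H}
        zero_mem' := by intro m hm; simp at hm
        one_mem' := by
          intro m hm
          rw [Polynomial.coeff_one] at hm
          by_cases h0 : m = 0
          · exact h0 ▸ zero_mem H
          · simp [h0] at hm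
        add_mem' := by
          intro p r hp hr m hm
          rw [Polynomial.coeff_add] at hm
          by_cases h : p.coeff m ≠ 0
          · exact hp m h
          · push_neg at h
            exact hr m (by intro h'; rw [h, h', add_zero] at hm; exact hm rfl)
        mul_mem' := by
          intro p r hp hr m hm
          rw [Polynomial.coeff_mul] at hm
          obtain ⟨⟨i, j⟩, hij, hne⟩ := Finset.exists_ne_zero_of_sum_ne_zero hm
          rw [Finset.HasAntidiagonal.mem_antidiagonal] at hij
          have hi : p.coeff i ≠ 0 := fun h => hne (by simp [h])
          have hj : r.coeff j ≠ 0 := fun h => hne (by simp [h])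
          exact hij ▸ add_mem (hp i hi) (hr j hj)
        algebraMap_mem' := by
          intro c m hm
          rw [Polynomial.algebraMap_eq, Polynomial.coeff_C] at hm
          by_cases h0 : m = 0
          · exact h0 ▸ zero_mem H
          · simp [h0] at hm }
    have hle : R ≤ T := by
      rw [hRdef]
      apply Algebra.adjoin_le
      rintro p ⟨h, hh, rfl⟩
      intro m hm
      rw [Polynomial.coeff_X_pow] at hm
      by_cases he : m = h
      · exact he ▸ hh
      · simp [he] at hm
    exact fun m hm => hle x.2 m hm
  -- membership in 𝔞 as divisibility
  have hcomap : ∀ x : R,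
      x ∈ (Ideal.span {(X : Polynomial k) ^ q}).comap (algebraMap R (Polynomial k)) ↔
        (X : Polynomial k) ^ q ∣ (x : Polynomial k) := by
    intro x
    rw [Ideal.mem_comap, halg x, Ideal.mem_span_singleton]
  have hdvdmono : ∀ m : ℕ, (X : Polynomial k) ^ q ∣ (X : Polynomial k) ^ m ↔ q ≤ m := by
    intro m
    constructor
    · intro h
      by_contra hlt
      push_neg at hlt
      have := Polynomial.X_pow_dvd_iff.mp h m hlt
      simp [Polynomial.coeff_X_pow] at this
    · exact pow_dvd_pow _
  -- notation for the first index
  have hb₁H : b ⟨0, hn⟩ ∈ H := hbH _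
  -- b₀ basic facts
  have hb₀𝔞 : (τ b₀ hb₀H) ∈
      (Ideal.span {(X : Polynomial k) ^ q}).comap (algebraMap R (Polynomial k)) := by
    rw [h𝔞]
    have hmem : τ b₀ hb₀H ∈ 𝔟 := hb₀𝔟 _ rfl
    rw [h𝔟] at hmem
    refine Ideal.span_mono ?_ hmem
    rintro x ⟨i, -, hx⟩
    exact ⟨i, hx⟩
  have hqb₀ : q ≤ b₀ := by
    exact (hdvdmono b₀).mp ((hcomap _).mp hb₀𝔞)
  have hb₁1 : 1 < b ⟨0, hn⟩ :=
    lt_of_le_of_ne (hq.trans_le (hbq _)) (fun e => h1 (by rw [e]; exact hb₁H))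
  have hb₀1 : 1 < b₀ :=
    lt_of_le_of_ne (hq.trans_le hqb₀) (fun e => h1 (by rw [e]; exact hb₀H))
  -- the candidate ideal J
  set Gset : Set R := {x : R |
      (x : Polynomial k) = (X : Polynomial k) ^ (b ⟨0, hn⟩) - X ^ b₀ ∨
      ∃ i : Fin n, i ≠ (⟨0, hn⟩ : Fin n) ∧
        (x : Polynomial k) = (X : Polynomial k) ^ (b i) - X ^ (b₀ + b i)} with hGset
  set J : Ideal R := Ideal.span Gset with hJ
  set g0 : R := τ (b ⟨0, hn⟩) hb₁H - τ b₀ hb₀H with hg0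
  have hg0J : g0 ∈ J := by
    apply Ideal.subset_span
    left
    show ((τ (b ⟨0, hn⟩) hb₁H - τ b₀ hb₀H : R) : Polynomial k) = _
    push_cast [hτ]
    ring
  -- generators for i ≠ 0
  have hgen0 : ∀ i : Fin n, i ≠ (⟨0, hn⟩ : Fin n) →
      τ (b i) (hbH i) - τ (b i) (hbH i) * τ b₀ hb₀H ∈ J := by
    intro i hi
    apply Ideal.subset_span
    right
    refine ⟨i, hi, ?_⟩
    push_cast [hτ]
    rw [← pow_add, add_comm b₀ (b i)]
  -- 𝔟 is fixed by multiplication by t^{b₀} modulo J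
  have h𝔟S : ∀ x ∈ 𝔟, x - x * τ b₀ hb₀H ∈ J := by
    intro x hx
    rw [h𝔟] at hx
    refine Submodule.span_induction ?_ ?_ ?_ ?_ hx
    · rintro x ⟨i, hi, hxi⟩
      have hxe : x = τ (b i) (hbH i) := Subtype.ext (by rw [hxi])
      rw [hxe]
      exact hgen0 i hi
    · simpa using J.zero_mem
    · intro x y _ _ hxJ hyJ
      have : x + y - (x + y) * τ b₀ hb₀H =
          (x - x * τ b₀ hb₀H) + (y - y * τ b₀ hb₀H) := by ring
      rw [this]
      exact add_mem hxJ hyJ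
    · intro a x _ hxJ
      simp only [smul_eq_mul]
      have hiden2 : a * x - a * x * τ b₀ hb₀H = a * (x - x * τ b₀ hb₀H) := by ring
      rw [hiden2]
      exact Ideal.mul_mem_left _ _ hxJ
  have hb₀self : τ b₀ hb₀H - τ b₀ hb₀H * τ b₀ hb₀H ∈ J := h𝔟S _ (hb₀𝔟 _ rfl)
  -- 𝔞 is fixed by multiplication by t^{b₀} modulo J
  have h𝔞S₀ : ∀ x ∈ Ideal.span {x : R | ∃ i : Fin n,
      (x : Polynomial k) = (X : Polynomial k) ^ (b i)}, x - x * τ b₀ hb₀H ∈ J := by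
    intro x hx
    refine Submodule.span_induction ?_ ?_ ?_ ?_ hx
    · rintro x ⟨i, hxi⟩
      have hxe : x = τ (b i) (hbH i) := Subtype.ext (by rw [hxi])
      rw [hxe]
      by_cases hi : i = (⟨0, hn⟩ : Fin n)
      · have hieq : τ (b i) (hbH i) = τ (b ⟨0, hn⟩) hb₁H := by subst hi; rfl
        rw [hieq]
        have hiden : τ (b ⟨0, hn⟩) hb₁H - τ (b ⟨0, hn⟩) hb₁H * τ b₀ hb₀H =
            g0 + (τ b₀ hb₀H - τ b₀ hb₀H * τ b₀ hb₀H) - τ b₀ hb₀H * g0 := by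
          rw [hg0]; ring
        rw [hiden]
        exact sub_mem (add_mem hg0J hb₀self) (Ideal.mul_mem_left _ _ hg0J)
      · exact hgen0 i hi
    · simpa using J.zero_mem
    · intro x y _ _ hxJ hyJ
      have : x + y - (x + y) * τ b₀ hb₀H =
          (x - x * τ b₀ hb₀H) + (y - y * τ b₀ hb₀H) := by ring
      rw [this]
      exact add_mem hxJ hyJ
    · intro a x _ hxJ
      simp only [smul_eq_mul]
      have hiden2 : a * x - a * x * τ b₀ hb₀H = a * (x - x * τ b₀ hb₀H) := by ring
      rw [hiden2]
      exact Ideal.mul_mem_left _ _ hxJ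
  -- likewise for t^{b₁}
  have h𝔞S₁ : ∀ x ∈ Ideal.span {x : R | ∃ i : Fin n,
      (x : Polynomial k) = (X : Polynomial k) ^ (b i)},
      x - x * τ (b ⟨0, hn⟩) hb₁H ∈ J := by
    intro x hx
    have hiden : x - x * τ (b ⟨0, hn⟩) hb₁H = (x - x * τ b₀ hb₀H) - x * g0 := by
      rw [hg0]; ring
    rw [hiden]
    exact sub_mem (h𝔞S₀ x hx) (Ideal.mul_mem_left _ _ hg0J)
  -- closure of {b₁, b₀}
  have hCH : ∀ c ∈ AddSubmonoid.closure ({b ⟨0, hn⟩, b₀} : Set ℕ), c ∈ H := by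
    intro c hc
    refine AddSubmonoid.closure_le.mpr ?_ hc
    rintro y hy
    rcases hy with rfl | rfl
    · exact hb₁H
    · exact hb₀H
  have hSC : ∀ c (hc : c ∈ AddSubmonoid.closure ({b ⟨0, hn⟩, b₀} : Set ℕ))
      (hcH : c ∈ H), ∀ x ∈ Ideal.span {x : R | ∃ i : Fin n,
        (x : Polynomial k) = (X : Polynomial k) ^ (b i)}, x - x * τ c hcH ∈ J := by
    intro c hc
    induction hc using AddSubmonoid.closure_induction with
    | mem y hy =>
      rcases hy with rfl | rfl
      · exact fun hcH => h𝔞S₁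
      · exact fun hcH => h𝔞S₀
    | zero =>
      intro hcH x hx
      have h0 : τ 0 hcH = 1 := Subtype.ext (by
        show (X : Polynomial k) ^ 0 = ((1 : R) : Polynomial k)
        rw [pow_zero]; rfl)
      rw [h0, mul_one, sub_self]
      exact J.zero_mem
    | add c c' hc hc' ihc ihc' =>
      intro hcH x hx
      have hcH1 := hCH c hc
      have hcH2 := hCH c' hc'
      have hmul : τ (c + c') hcH = τ c hcH1 * τ c' hcH2 :=
        Subtype.ext (by push_cast [hτ]; rw [pow_add])
      have hiden : x - x * τ (c + c') hcH =
          (x - x * τ c hcH1) + ((x * τ c hcH1) - (x * τ c hcH1) * τ c' hcH2) := by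
        rw [hmul]; ring
      rw [hiden]
      exact add_mem (ihc hcH1 x hx) (ihc' hcH2 _ (Ideal.mul_mem_right _ _ hx))
  have hFrob : ∀ m : ℕ, b ⟨0, hn⟩ * b₀ ≤ m →
      m ∈ AddSubmonoid.closure ({b ⟨0, hn⟩, b₀} : Set ℕ) := by
    intro m hm
    by_contra hcon
    have h2 := (frobeniusNumber_pair hgcd hb₁1 hb₀1).2 hcon
    have h3 : b ⟨0, hn⟩ + b₀ ≤ b ⟨0, hn⟩ * b₀ := Nat.add_le_mul hb₁1 hb₀1
    omega
  -- monomial membership in 𝔞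
  have hτ𝔞 : ∀ a (ha : a ∈ H), q ≤ a → τ a ha ∈ Ideal.span {x : R | ∃ i : Fin n,
      (x : Polynomial k) = (X : Polynomial k) ^ (b i)} := by
    intro a ha hqa
    rw [← h𝔞]
    exact (hcomap _).mpr (pow_dvd_pow _ hqa)
  -- the key difference lemma
  have hmono : ∀ a a' (ha : a ∈ H) (ha' : a' ∈ H), q ≤ a → q ≤ a' →
      τ a ha - τ a' ha' ∈ J := by
    have key : ∀ a a' (ha : a ∈ H) (ha' : a' ∈ H), q ≤ a → q ≤ a' → a ≤ a' →
        τ a ha - τ a' ha' ∈ J := by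
      intro a a' ha ha' hqa hqa' hle
      have hcC : b ⟨0, hn⟩ * b₀ + (a' - a) ∈
          AddSubmonoid.closure ({b ⟨0, hn⟩, b₀} : Set ℕ) := hFrob _ (Nat.le_add_right _ _)
      have hc'C : b ⟨0, hn⟩ * b₀ ∈
          AddSubmonoid.closure ({b ⟨0, hn⟩, b₀} : Set ℕ) := hFrob _ le_rfl
      have hcH1 := hCH _ hcC
      have hcH2 := hCH _ hc'C
      have h1m : τ a ha - τ a ha * τ _ hcH1 ∈ J := hSC _ hcC hcH1 _ (hτ𝔞 a ha hqa)
      have h2m : τ a' ha' - τ a' ha' * τ _ hcH2 ∈ J := hSC _ hc'C hcH2 _ (hτ𝔞 a' ha' hqa')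
      have heq : τ a ha * τ (b ⟨0, hn⟩ * b₀ + (a' - a)) hcH1 =
          τ a' ha' * τ (b ⟨0, hn⟩ * b₀) hcH2 := by
        apply Subtype.ext
        push_cast [hτ]
        rw [← pow_add, ← pow_add]
        congr 1
        omega
      have hiden : τ a ha - τ a' ha' =
          (τ a ha - τ a ha * τ _ hcH1) - (τ a' ha' - τ a' ha' * τ _ hcH2) := by
        rw [heq]; ring
      rw [hiden]
      exact sub_mem h1m h2m
    intro a a' ha ha' hqa hqa'
    rcases le_total a a' with h | h
    · exact key a a' ha ha' hqa hqa' h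
    · have := J.neg_mem (key a' a ha' ha hqa' hqa h)
      rwa [neg_sub] at this
  -- J ≤ Ī
  have hdvd2 : ∀ a c : ℕ, q ≤ a → q ≤ c →
      (X : Polynomial k) ^ q * (1 - X) ∣ X ^ a - X ^ c := by
    have key : ∀ a c : ℕ, q ≤ a → a ≤ c →
        (X : Polynomial k) ^ q * (1 - X) ∣ X ^ a - X ^ c := by
      intro a c ha hle
      have heq : (X : Polynomial k) ^ a - X ^ c = X ^ a * (1 - X ^ (c - a)) := by
        rw [mul_sub, mul_one, ← pow_add, Nat.add_sub_cancel' hle]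
      rw [heq]
      refine mul_dvd_mul (pow_dvd_pow _ ha) ?_
      simpa using sub_dvd_pow_sub_pow (1 : Polynomial k) X (c - a)
    intro a c ha hc
    rcases le_total a c with h | h
    · exact key a c ha h
    · have := key c a hc h
      rw [show (X : Polynomial k) ^ a - X ^ c = -(X ^ c - X ^ a) by ring]
      exact dvd_neg.mpr this
  have hJle : J ≤ (I.map (algebraMap R (Polynomial k))).comap
      (algebraMap R (Polynomial k)) := by
    rw [hIS]
    rw [hJ, Ideal.span_le]
    rintro x hx
    rw [SetLike.mem_coe, Ideal.mem_comap, halg x, Ideal.mem_span_singleton]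
    rcases hx with hx | ⟨i, hi, hx⟩
    · rw [hx]
      exact hdvd2 _ _ (hbq _) hqb₀
    · rw [hx]
      exact hdvd2 _ _ (hbq i) (hqb₀.trans (Nat.le_add_right _ _))
  -- Ī ≤ J
  have hleJ : (I.map (algebraMap R (Polynomial k))).comap
      (algebraMap R (Polynomial k)) ≤ J := by
    intro x hx
    rw [hIS, Ideal.mem_comap, halg x, Ideal.mem_span_singleton] at hx
    -- divisibility facts
    have hXq : (X : Polynomial k) ^ q ∣ (x : Polynomial k) :=
      dvd_trans (dvd_mul_right _ _) hx
    have hsupp : ∀ m ∈ (x : Polynomial k).support, q ≤ m := by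
      intro m hm
      by_contra hlt
      push_neg at hlt
      exact (Polynomial.mem_support_iff.mp hm) (Polynomial.X_pow_dvd_iff.mp hXq m hlt)
    have heval : Polynomial.eval 1 (x : Polynomial k) = 0 := by
      obtain ⟨g, hg⟩ := hx
      rw [hg]
      simp
    have hsum : ∑ m ∈ (x : Polynomial k).support, (x : Polynomial k).coeff m = 0 := by
      have hev : Polynomial.eval 1 (x : Polynomial k) =
          ∑ m ∈ (x : Polynomial k).support, (x : Polynomial k).coeff m := by
        conv_lhs => rw [(x : Polynomial k).as_sum_support_C_mul_X_pow]
        rw [Polynomial.eval_finset_sum]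
        simp
      rw [← hev, heval]
    -- decomposition of x as sum of monomials
    have hdecomp : x = ∑ m ∈ (x : Polynomial k).support.attach,
        (x : Polynomial k).coeff m.1 •
          τ m.1 (hcoeffH x m.1 (Polynomial.mem_support_iff.mp m.2)) := by
      apply Subtype.ext
      simp only [AddSubmonoidClass.coe_finset_sum, SetLike.val_smul]
      calc (x : Polynomial k)
          = ∑ m ∈ (x : Polynomial k).support, C ((x : Polynomial k).coeff m) * X ^ m :=
            (x : Polynomial k).as_sum_support_C_mul_X_pow
        _ = ∑ m ∈ (x : Polynomial k).support.attach,
              (x : Polynomial k).coeff m.1 • (X : Polynomial k) ^ m.1 := by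
            rw [← Finset.sum_attach]
            simp [Polynomial.smul_eq_C_mul]
    have hx2 : x = ∑ m ∈ (x : Polynomial k).support.attach,
        (x : Polynomial k).coeff m.1 •
          (τ m.1 (hcoeffH x m.1 (Polynomial.mem_support_iff.mp m.2)) - τ q hqH) := by
      have hsplit : ∑ m ∈ (x : Polynomial k).support.attach,
          (x : Polynomial k).coeff m.1 •
            (τ m.1 (hcoeffH x m.1 (Polynomial.mem_support_iff.mp m.2)) - τ q hqH) =
          (∑ m ∈ (x : Polynomial k).support.attach,
            (x : Polynomial k).coeff m.1 •
              τ m.1 (hcoeffH x m.1 (Polynomial.mem_support_iff.mp m.2))) -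
          (∑ m ∈ (x : Polynomial k).support.attach,
            (x : Polynomial k).coeff m.1) • τ q hqH := by
        rw [Finset.sum_smul]
        rw [← Finset.sum_sub_distrib]
        congr 1
        ext m
        rw [smul_sub]
      rw [hsplit, ← hdecomp]
      have : ∑ m ∈ (x : Polynomial k).support.attach, (x : Polynomial k).coeff m.1 = 0 := by
        rw [Finset.sum_attach _ (fun m => (x : Polynomial k).coeff m)]
        exact hsum
      rw [this, zero_smul, sub_zero]
    rw [hx2]
    refine sum_mem ?_
    intro m _
    have hmem : τ m.1 (hcoeffH x m.1 (Polynomial.mem_support_iff.mp m.2)) - τ q hqH ∈ J :=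
      hmono m.1 q (hcoeffH x m.1 (Polynomial.mem_support_iff.mp m.2)) hqH (hsupp m.1 m.2) le_rfl
    rw [Algebra.smul_def]
    exact Ideal.mul_mem_left _ _ hmem
  have hEq : (I.map (algebraMap R (Polynomial k))).comap
      (algebraMap R (Polynomial k)) = J := le_antisymm hleJ hJle
  refine ⟨hEq, ?_⟩
  rw [hEq]
  -- the μ bound
  set f : Fin n → R := fun i =>
    if h : i = (⟨0, hn⟩ : Fin n) then g0
    else τ (b i) (hbH i) - τ (b₀ + b i) (add_mem hb₀H (hbH i)) with hf
  have hset : Gset = ↑(Finset.image f Finset.univ) := by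
    ext x
    constructor
    · rintro (hx | ⟨i, hi, hx⟩)
      · refine Finset.mem_coe.mpr (Finset.mem_image.mpr ⟨⟨0, hn⟩, Finset.mem_univ _, ?_⟩)
        rw [hf]
        simp only [dif_pos]
        apply Subtype.ext
        rw [hx, hg0]
        push_cast [hτ]
        ring
      · refine Finset.mem_coe.mpr (Finset.mem_image.mpr ⟨i, Finset.mem_univ _, ?_⟩)
        rw [hf]
        simp only [dif_neg hi]
        apply Subtype.ext
        rw [hx]
        push_cast [hτ]
        ring
    · intro hx
      obtain ⟨i, -, rfl⟩ := Finset.mem_image.mp (Finset.mem_coe.mp hx)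
      rw [hf]
      by_cases hi : i = (⟨0, hn⟩ : Fin n)
      · simp only [dif_pos hi]
        left
        rw [hg0]
        push_cast [hτ]
        ring
      · simp only [dif_neg hi]
        right
        refine ⟨i, hi, ?_⟩
        push_cast [hτ]
        ring
  have hμ : muIdeal J ≤ (Finset.image f Finset.univ).card := by
    apply Nat.sInf_le
    exact ⟨Finset.image f Finset.univ, rfl, by rw [hJ, hset]⟩
  refine hμ.trans (Finset.card_image_le.trans ?_)
  simp
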